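/- Let b, v₁,…,vₙ ∈ ℝ³ (indices mod n), and assume all the quantities ⟨b,vᵢ,vᵢ₊₁⟩ := det(b,vᵢ,vᵢ₊₁) are nonzero. Define Bᵢ,ᵢ = −det(b,vᵢ₋₁,vᵢ₊₁)/(det(b,vᵢ₋₁,vᵢ)·det(b,vᵢ,vᵢ₊₁)) and Bᵢ,ᵢ₊₁ = 1/det(b,vᵢ,vᵢ₊₁), with B₁,₀ := −B₁,ₙ and Bₙ,ₙ₊₁ := −Bₙ,₁. Then for each i: B_{i,i−1}·vᵢ₋₁ + B_{i,i}·vᵢ + B_{i,i+1}·vᵢ₊₁ = [det(vᵢ₋₁,vᵢ,vᵢ₊₁)/(det(b,vᵢ₋₁,vᵢ)·det(b,vᵢ,vᵢ₊₁))] · b. -/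

import Mathlib

/-- The determinant of the 3×3 matrix with columns `a`, `b`, `c`. -/
noncomputable def det3 (a b c : Fin 3 → ℝ) : ℝ :=
  Matrix.det (Matrix.of fun i j => ![a, b, c] j i)

lemma det3_expand (a b c : Fin 3 → ℝ) :
    det3 a b c = a 0 * (b 1 * c 2 - b 2 * c 1) - b 0 * (a 1 * c 2 - a 2 * c 1)
      + c 0 * (a 1 * b 2 - a 2 * b 1) := by
  simp [det3, Matrix.det_fin_three]; ring

lemma cramer3 (a c d b : Fin 3 → ℝ) (j : Fin 3) :
    det3 b c d * a j - det3 b a d * c j + det3 b a c * d j = det3 a c d * b j := by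
  fin_cases j <;> simp [det3_expand] <;> ring

/-- With cyclic indices (so that `v₀ = vₙ`, `vₙ₊₁ = v₁`, which
also encodes the sign conventions `B₁,₀ = −B₁,ₙ`, `Bₙ,ₙ₊₁ = −Bₙ,₁`), the
tridiagonal coefficients `B_{i,i−1} = 1/det(b,vᵢ₋₁,vᵢ)`,
`B_{i,i} = −det(b,vᵢ₋₁,vᵢ₊₁)/(det(b,vᵢ₋₁,vᵢ)·det(b,vᵢ,vᵢ₊₁))`,
`B_{i,i+1} = 1/det(b,vᵢ,vᵢ₊₁)` satisfy
`B_{i,i−1}vᵢ₋₁ + B_{i,i}vᵢ + B_{i,i+1}vᵢ₊₁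
  = (det(vᵢ₋₁,vᵢ,vᵢ₊₁)/(det(b,vᵢ₋₁,vᵢ)·det(b,vᵢ,vᵢ₊₁))) • b`. -/
theorem tridiagonal_identity (n : ℕ) [NeZero n]
    (b : Fin 3 → ℝ) (v : Fin n → (Fin 3 → ℝ))
    (hden : ∀ i : Fin n, det3 b (v i) (v (i + 1)) ≠ 0) :
    ∀ i : Fin n,
      (1 / det3 b (v (i - 1)) (v i)) • v (i - 1)
        + (-(det3 b (v (i - 1)) (v (i + 1)))
            / (det3 b (v (i - 1)) (v i) * det3 b (v i) (v (i + 1)))) • v i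
        + (1 / det3 b (v i) (v (i + 1))) • v (i + 1)
      = (det3 (v (i - 1)) (v i) (v (i + 1))
          / (det3 b (v (i - 1)) (v i) * det3 b (v i) (v (i + 1)))) • b := by
  intro i
  have h1 : det3 b (v (i - 1)) (v i) ≠ 0 := by
    have := hden (i - 1); rwa [sub_add_cancel] at this
  have h2 : det3 b (v i) (v (i + 1)) ≠ 0 := hden i
  funext j
  have key := cramer3 (v (i - 1)) (v i) (v (i + 1)) b j
  simp only [Pi.add_apply, Pi.smul_apply, smul_eq_mul]
  field_simp
  linear_combination key
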